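/- The enstrophy S(φ) = (1/2) Σ_{0<|k|≤N} |k|⁴ |φ_k|² is a first integral of the truncated 2D Euler equation dφ_k/dt = B_k^N(φ): Σ_k B_k^N(φ) ∂S/∂φ_k = 0 for all φ, under the same symmetric truncation hypothesis. -/

import Mathlib

/-- The truncated 2D Euler vector field on complex Fourier coefficients. -/
noncomputable def BeulerC (S : Finset (ℤ × ℤ)) (k : ℤ × ℤ) (φ : ℤ × ℤ → ℂ) : ℂ :=
  ((4 * Real.pi ^ 2 / ((k.1 : ℝ) ^ 2 + (k.2 : ℝ) ^ 2) : ℝ) : ℂ) *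
    ∑ h ∈ S.filter (fun h => h ≠ k ∧ k - h ∈ S),
      ((k.1 * h.2 - k.2 * h.1 : ℤ) : ℂ) *
        (((k.1 - h.1) ^ 2 + (k.2 - h.2) ^ 2 : ℤ) : ℂ) * φ h * φ (k - h)

lemma sq_norm_ne_zero {k : ℤ × ℤ} (hk : k ≠ ((0:ℤ), (0:ℤ))) :
    ((k.1 : ℂ) ^ 2 + (k.2 : ℂ) ^ 2) ≠ 0 := by
  have h1 : k.1 ≠ 0 ∨ k.2 ≠ 0 := by
    by_contra h
    push_neg at h
    exact hk (Prod.ext h.1 h.2)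
  have hr : ((k.1 : ℝ) ^ 2 + (k.2 : ℝ) ^ 2) ≠ 0 := by
    rcases h1 with h | h
    · have : (0:ℝ) < (k.1:ℝ)^2 := by positivity
      nlinarith [sq_nonneg ((k.2:ℝ))]
    · have : (0:ℝ) < (k.2:ℝ)^2 := by positivity
      nlinarith [sq_nonneg ((k.1:ℝ))]
  intro h
  apply hr
  have := congrArg Complex.re h
  simpa [Complex.add_re, ← Complex.ofReal_intCast, ← Complex.ofReal_pow] using this


lemma term_eq (φ : ℤ × ℤ → ℂ) (k h : ℤ × ℤ) (hk : k ≠ ((0:ℤ), (0:ℤ))) :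
    (((k.1 ^ 2 + k.2 ^ 2) ^ 2 : ℤ) : ℂ) * φ (-k) *
      (((4 * Real.pi ^ 2 / ((k.1 : ℝ) ^ 2 + (k.2 : ℝ) ^ 2) : ℝ) : ℂ) *
        (((k.1 * h.2 - k.2 * h.1 : ℤ) : ℂ) *
          (((k.1 - h.1) ^ 2 + (k.2 - h.2) ^ 2 : ℤ) : ℂ) * φ h * φ (k - h)))
    = ((4 * Real.pi ^ 2 : ℝ) : ℂ) *
        (((k.1 : ℂ) ^ 2 + (k.2 : ℂ) ^ 2) * ((k.1 : ℂ) * h.2 - (k.2 : ℂ) * h.1) *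
          (((k.1 : ℂ) - h.1) ^ 2 + ((k.2 : ℂ) - h.2) ^ 2) * φ (-k) * φ h * φ (k - h)) := by
  have d := sq_norm_ne_zero hk
  push_cast
  field_simp

/-- the enstrophy `S(φ) = ½ ∑_k |k|⁴ |φ_k|²` is a first integral of the
truncated 2D Euler equation: since `∂S/∂φ_k = |k|⁴ φ_{−k}`, the claim is
`∑_k |k|⁴ φ_{−k} B_k^N(φ) = 0`, under the same symmetric truncation hypothesis. -/
theorem stmt7 (S : Finset (ℤ × ℤ)) (h0 : ((0 : ℤ), (0 : ℤ)) ∉ S)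
    (hsym : ∀ k ∈ S, -k ∈ S) (φ : ℤ × ℤ → ℂ)
    (hreal : ∀ k, φ (-k) = starRingEnd ℂ (φ k)) :
    ∑ k ∈ S, (((k.1 ^ 2 + k.2 ^ 2) ^ 2 : ℤ) : ℂ) * φ (-k) * BeulerC S k φ = 0 := by
  classical
  set F : (_ : ℤ × ℤ) × (ℤ × ℤ) → ℂ := fun p =>
    (((p.1.1 ^ 2 + p.1.2 ^ 2) ^ 2 : ℤ) : ℂ) * φ (-p.1) *
      (((4 * Real.pi ^ 2 / ((p.1.1 : ℝ) ^ 2 + (p.1.2 : ℝ) ^ 2) : ℝ) : ℂ) *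
        (((p.1.1 * p.2.2 - p.1.2 * p.2.1 : ℤ) : ℂ) *
          (((p.1.1 - p.2.1) ^ 2 + (p.1.2 - p.2.2) ^ 2 : ℤ) : ℂ) * φ p.2 * φ (p.1 - p.2)))
    with hF
  have step1 : ∑ k ∈ S, (((k.1 ^ 2 + k.2 ^ 2) ^ 2 : ℤ) : ℂ) * φ (-k) * BeulerC S k φ
      = ∑ p ∈ S.sigma (fun k => S.filter (fun h => h ≠ k ∧ k - h ∈ S)), F p := by
    rw [Finset.sum_sigma]
    refine Finset.sum_congr rfl fun k hk => ?_
    rw [BeulerC, Finset.mul_sum, Finset.mul_sum]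
  rw [step1]
  refine Finset.sum_involution (fun p _ => ⟨p.2 - p.1, p.2⟩) ?_ ?_ ?_ ?_
  · -- cancellation
    rintro ⟨k, h⟩ hp
    simp only [Finset.mem_sigma, Finset.mem_filter] at hp
    obtain ⟨hkS, hhS, hne, hkh⟩ := hp
    have hk0 : k ≠ ((0:ℤ), (0:ℤ)) := fun e => h0 (e ▸ hkS)
    have hk0' : (h - k) ≠ ((0:ℤ), (0:ℤ)) := fun e => hne (sub_eq_zero.mp e)
    simp only [hF]
    rw [term_eq φ k h hk0, term_eq φ (h - k) h hk0']
    have e1 : -(h - k) = k - h := by ring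
    have e2 : h - k - h = -k := by ring
    rw [e1, e2]
    simp only [Prod.fst_sub, Prod.snd_sub]
    push_cast
    ring
  · -- g_ne
    rintro ⟨k, h⟩ hp hne heq
    apply hne
    have hk : h - k = k := congrArg Sigma.fst heq
    have h2 : h = k + k := by
      have := sub_eq_iff_eq_add.mp hk
      linear_combination this
    subst h2
    simp only [hF, Prod.fst_add, Prod.snd_add]
    ring_nf
    simp
  · -- g_mem
    rintro ⟨k, h⟩ hp
    simp only [Finset.mem_sigma, Finset.mem_filter] at hp ⊢
    obtain ⟨hkS, hhS, hne, hkh⟩ := hp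
    refine ⟨?_, hhS, ?_, ?_⟩
    · have := hsym _ hkh
      simpa using this
    · intro e
      have hk0 : k = 0 := sub_eq_self.mp e.symm
      refine h0 ?_
      rw [Prod.mk_zero_zero, ← hk0]
      exact hkS
    · have : h - k - h = -k := by ring
      rw [this]
      exact hsym _ hkS
  · -- involution
    rintro ⟨k, h⟩ hp
    simp only [Sigma.mk.inj_iff]
    constructor
    · ring
    · rfl
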